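/- Let B be an n×2 integer matrix (n ≥ 4) whose first four rows lie in the open quadrants (+,+), (−,+), (−,−), (+,−) of ℤ² respectively. Let v ∈ ℂⁿ be defined by v = B₁₊ + B₂₊ − e₁ − e₂ − e₄ + Σ_{i=5}^n αᵢ eᵢ, where B₁, B₂ are the columns of B, u₊ denotes the componentwise positive part, and α₅,…,αₙ are non-rational complex numbers. Then there is no z ∈ ℤ² with z ≠ 0 such that (B·z)ᵢ ≤ vᵢ for i = 1,2,4 and (B·z)₃ < 0. (Equivalently, v − e₃ has minimum negative support with respect to shifts by integer combinations of the columns of B.) -/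
import Mathlib


/-- With `B` an n×2 integer matrix whose first four rows lie in the open
quadrants (+,+), (−,+), (−,−), (+,−) of ℤ², and `v` the vector of Construction 3.3
(whose coordinates 1, 2, 4 are the integers `b₁₁+b₁₂−1`, `b₂₂−1`, `b₄₁−1`, the
positive parts minus 1), there is no nonzero `z ∈ ℤ²` with `(B·z)ᵢ ≤ vᵢ` for
`i = 1,2,4` and `(B·z)₃ < 0`; i.e. `v − e₃` has minimum negative support. -/
theorem stmt0 (n : ℕ) (hn : 4 ≤ n) (B : Fin n → Fin 2 → ℤ)
    (h1 : 0 < B ⟨0, by omega⟩ 0 ∧ 0 < B ⟨0, by omega⟩ 1)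
    (h2 : B ⟨1, by omega⟩ 0 < 0 ∧ 0 < B ⟨1, by omega⟩ 1)
    (h3 : B ⟨2, by omega⟩ 0 < 0 ∧ B ⟨2, by omega⟩ 1 < 0)
    (h4 : 0 < B ⟨3, by omega⟩ 0 ∧ B ⟨3, by omega⟩ 1 < 0) :
    ¬ ∃ z : ℤ × ℤ, z ≠ 0 ∧
      B ⟨0, by omega⟩ 0 * z.1 + B ⟨0, by omega⟩ 1 * z.2 ≤
        max (B ⟨0, by omega⟩ 0) 0 + max (B ⟨0, by omega⟩ 1) 0 - 1 ∧
      B ⟨1, by omega⟩ 0 * z.1 + B ⟨1, by omega⟩ 1 * z.2 ≤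
        max (B ⟨1, by omega⟩ 0) 0 + max (B ⟨1, by omega⟩ 1) 0 - 1 ∧
      B ⟨3, by omega⟩ 0 * z.1 + B ⟨3, by omega⟩ 1 * z.2 ≤
        max (B ⟨3, by omega⟩ 0) 0 + max (B ⟨3, by omega⟩ 1) 0 - 1 ∧
      B ⟨2, by omega⟩ 0 * z.1 + B ⟨2, by omega⟩ 1 * z.2 < 0 := by
  obtain ⟨ha, hb⟩ := h1
  obtain ⟨hc, hd⟩ := h2
  obtain ⟨he, hf⟩ := h3
  obtain ⟨hg, hh⟩ := h4
  rintro ⟨⟨x, y⟩, -, H1, H2, H4, H3⟩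
  simp only at H1 H2 H3 H4
  have m1 : max (B ⟨0, by omega⟩ 0) 0 = B ⟨0, by omega⟩ 0 := max_eq_left ha.le
  have m2 : max (B ⟨0, by omega⟩ 1) 0 = B ⟨0, by omega⟩ 1 := max_eq_left hb.le
  have m3 : max (B ⟨1, by omega⟩ 0) 0 = 0 := max_eq_right hc.le
  have m4 : max (B ⟨1, by omega⟩ 1) 0 = B ⟨1, by omega⟩ 1 := max_eq_left hd.le
  have m5 : max (B ⟨3, by omega⟩ 0) 0 = B ⟨3, by omega⟩ 0 := max_eq_left hg.le
  have m6 : max (B ⟨3, by omega⟩ 1) 0 = 0 := max_eq_right hh.le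
  rcases le_or_gt x 0 with hx | hx <;> rcases le_or_gt y 0 with hy | hy
  · have p1 : 0 ≤ B ⟨2, by omega⟩ 0 * x := mul_nonneg_of_nonpos_of_nonpos he.le hx
    have p2 : 0 ≤ B ⟨2, by omega⟩ 1 * y := mul_nonneg_of_nonpos_of_nonpos hf.le hy
    linarith [H3, p1, p2]
  · have p1 : 0 ≤ B ⟨1, by omega⟩ 0 * x := mul_nonneg_of_nonpos_of_nonpos hc.le hx
    have p2 : B ⟨1, by omega⟩ 1 ≤ B ⟨1, by omega⟩ 1 * y :=
      le_mul_of_one_le_right hd.le (by omega)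
    linarith [H2, m3, m4, p1, p2]
  · have p1 : B ⟨3, by omega⟩ 0 ≤ B ⟨3, by omega⟩ 0 * x :=
      le_mul_of_one_le_right hg.le (by omega)
    have p2 : 0 ≤ B ⟨3, by omega⟩ 1 * y := mul_nonneg_of_nonpos_of_nonpos hh.le hy
    linarith [H4, m5, m6, p1, p2]
  · have p1 : B ⟨0, by omega⟩ 0 ≤ B ⟨0, by omega⟩ 0 * x :=
      le_mul_of_one_le_right ha.le (by omega)
    have p2 : B ⟨0, by omega⟩ 1 ≤ B ⟨0, by omega⟩ 1 * y :=
      le_mul_of_one_le_right hb.le (by omega)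
    linarith [H1, m1, m2, p1, p2]
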